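/- The Young–Jucys–Murphy elements X_1, X_2, …, X_n of ℂ[G≀S_n] pairwise commute, and moreover each X_i commutes with g^{(l)} for every g ∈ G and 1 ≤ l ≤ n. -/

import Mathlib

/-- The action of `Equiv.Perm (Fin n)` on `Fin n → G` by permuting coordinates. -/
def wreathHom (G : Type*) [Group G] (n : ℕ) : Equiv.Perm (Fin n) →* MulAut (Fin n → G) where
  toFun π := MulEquiv.arrowCongr π (MulEquiv.refl G)
  map_one' := by ext f i; rfl
  map_mul' := by intro π σ; ext f i; rfl

/-- The wreath product `G ≀ Sₙ`. -/
abbrev WreathProduct (G : Type*) [Group G] (n : ℕ) :=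
  SemidirectProduct (Fin n → G) (Equiv.Perm (Fin n)) (wreathHom G n)

/-- `g^{(i)}` : the element of `G ≀ Sₙ` with `g` in the `i`-th coordinate. -/
def gAt {G : Type*} [Group G] {n : ℕ} (i : Fin n) (g : G) : WreathProduct G n :=
  SemidirectProduct.inl (Pi.mulSingle i g)

/-- A permutation viewed inside `G ≀ Sₙ`. -/
def pIn {G : Type*} [Group G] {n : ℕ} (π : Equiv.Perm (Fin n)) : WreathProduct G n :=
  SemidirectProduct.inr π

/-- The Young–Jucys–Murphy element with 0-based index: for `i : Fin n`, `YJM G n i` is the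
element `X_{i+1}` (1-based), namely `X_{i+1} = Σ_{k<i} Σ_{g∈G} (g⁻¹)^{(k)} g^{(i)} (k,i)`. -/
noncomputable def YJM (G : Type*) [Group G] [Fintype G] (n : ℕ) (i : Fin n) :
    MonoidAlgebra ℂ (WreathProduct G n) :=
  ∑ k ∈ Finset.univ.filter (fun k : Fin n => k < i), ∑ g : G,
    MonoidAlgebra.of ℂ (WreathProduct G n)
      (gAt k g⁻¹ * gAt i g * pIn (Equiv.swap k i))

variable {G : Type*} [Group G] {n : ℕ}

lemma wreathHom_apply (π : Equiv.Perm (Fin n)) (f : Fin n → G) (x : Fin n) :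
    wreathHom G n π f x = f (π.symm x) := rfl

lemma T_eq (a b : Fin n) (u v : G) (σ : Equiv.Perm (Fin n)) :
    gAt a u * gAt b v * pIn σ = ⟨Pi.mulSingle a u * Pi.mulSingle b v, σ⟩ := by
  rw [gAt, gAt, pIn, ← map_mul, ← SemidirectProduct.mk_eq_inl_mul_inr]

open Equiv SemidirectProduct in
lemma GEN (f : Fin n → G) (π : Equiv.Perm (Fin n)) (m j : Fin n) (h : G)
    (hmj : m ≠ j) (hfj : f j = 1) (hπj : π j = j) :
    (⟨f, π⟩ : WreathProduct G n) * (gAt m h⁻¹ * gAt j h * pIn (Equiv.swap m j)) =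
      gAt (π m) (h * (f (π m))⁻¹)⁻¹ * gAt j (h * (f (π m))⁻¹) * pIn (Equiv.swap (π m) j)
        * ⟨f, π⟩ := by
  have hπm : π m ≠ j := fun e => hmj (π.injective (e.trans hπj.symm))
  rw [T_eq, T_eq]
  refine SemidirectProduct.ext ?_ ?_
  · show f * wreathHom G n π (Pi.mulSingle m h⁻¹ * Pi.mulSingle j h)
      = (Pi.mulSingle (π m) (h * (f (π m))⁻¹)⁻¹ * Pi.mulSingle j (h * (f (π m))⁻¹))
          * wreathHom G n (Equiv.swap (π m) j) f
    funext x
    simp only [Pi.mul_apply]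
    have hsj : π.symm j = j := π.injective (by rw [Equiv.apply_symm_apply, hπj])
    by_cases hx1 : x = π m
    · subst hx1
      simp [wreathHom_apply, Pi.mulSingle_apply, hmj, hπm, hfj, Equiv.swap_apply_left, mul_assoc]
    · by_cases hx2 : x = j
      · subst hx2
        simp [wreathHom_apply, Pi.mulSingle_apply, hsj, hmj.symm, hπm.symm, hfj,
          Equiv.swap_apply_right, mul_assoc]
      · have h1 : π.symm x ≠ m := fun e => hx1 (by rw [← e, Equiv.apply_symm_apply])
        have h2 : π.symm x ≠ j := fun e => hx2 (by rw [← hsj] at e; exact π.symm.injective e)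
        simp [wreathHom_apply, Pi.mulSingle_apply, h1, h2, hx1, hx2,
          Equiv.swap_apply_of_ne_of_ne hx1 hx2]
  · show π * Equiv.swap m j = Equiv.swap (π m) j * π
    rw [Equiv.mul_swap_eq_swap_mul, hπj]

lemma gAt_mk (i : Fin n) (g : G) : gAt i g = (⟨Pi.mulSingle i g, 1⟩ : WreathProduct G n) := rfl

lemma GENj (g : G) (m j : Fin n) (h : G) (hmj : m ≠ j) :
    gAt j g * (gAt m h⁻¹ * gAt j h * pIn (Equiv.swap m j)) =
      (gAt m (g * h)⁻¹ * gAt j (g * h) * pIn (Equiv.swap m j)) * gAt j g := by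
  rw [gAt_mk j g, T_eq, T_eq]
  refine SemidirectProduct.ext ?_ ?_
  · show Pi.mulSingle j g * wreathHom G n 1 (Pi.mulSingle m h⁻¹ * Pi.mulSingle j h)
      = (Pi.mulSingle m (g * h)⁻¹ * Pi.mulSingle j (g * h))
          * wreathHom G n (Equiv.swap m j) (Pi.mulSingle j g)
    rw [map_one]
    funext x
    simp only [Pi.mul_apply, MulAut.one_apply, wreathHom_apply]
    by_cases hx1 : x = m
    · subst hx1
      simp [Pi.mulSingle_apply, hmj, hmj.symm, Equiv.swap_apply_left, mul_assoc]
    · by_cases hx2 : x = j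
      · subst hx2
        simp [Pi.mulSingle_apply, hmj.symm, Equiv.swap_apply_right]
      · simp [Pi.mulSingle_apply, hx1, hx2, Equiv.swap_apply_of_ne_of_ne hx1 hx2]
  · show 1 * Equiv.swap m j = Equiv.swap m j * 1
    rw [one_mul, mul_one]

lemma conj_YJM [Fintype G] (j : Fin n) (w : WreathProduct G n) (π : Equiv.Perm (Fin n))
    (φ : Fin n → G ≃ G)
    (hπ : ∀ k : Fin n, k < j → π k < j) (hπ' : ∀ k : Fin n, k < j → π.symm k < j)
    (hc : ∀ k : Fin n, k < j → ∀ g : G,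
      w * (gAt k g⁻¹ * gAt j g * pIn (Equiv.swap k j)) =
        (gAt (π k) ((φ k g)⁻¹) * gAt j (φ k g) * pIn (Equiv.swap (π k) j)) * w) :
    MonoidAlgebra.of ℂ (WreathProduct G n) w * YJM G n j
      = YJM G n j * MonoidAlgebra.of ℂ (WreathProduct G n) w := by
  classical
  set o := MonoidAlgebra.of ℂ (WreathProduct G n) with ho
  unfold YJM
  rw [Finset.mul_sum, Finset.sum_mul]
  have step1 : ∀ k : Fin n, k ∈ Finset.univ.filter (fun k : Fin n => k < j) →
      o w * ∑ g : G, o (gAt k g⁻¹ * gAt j g * pIn (Equiv.swap k j))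
      = (∑ g : G, o (gAt (π k) g⁻¹ * gAt j g * pIn (Equiv.swap (π k) j))) * o w := by
    intro k hk
    have hk' : k < j := (Finset.mem_filter.mp hk).2
    rw [Finset.mul_sum, Finset.sum_mul]
    rw [← Equiv.sum_comp (φ k)
      (fun g => o (gAt (π k) g⁻¹ * gAt j g * pIn (Equiv.swap (π k) j)) * o w)]
    refine Finset.sum_congr rfl fun g _ => ?_
    rw [← map_mul, hc k hk' g, map_mul]
  rw [Finset.sum_congr rfl step1]
  refine Finset.sum_nbij' (fun k => π k) (fun k => π.symm k) ?_ ?_ ?_ ?_ ?_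
  · intro k hk
    simp only [Finset.mem_filter, Finset.mem_univ, true_and] at *
    exact hπ k hk
  · intro k hk
    simp only [Finset.mem_filter, Finset.mem_univ, true_and] at *
    exact hπ' k hk
  · intro k _; exact π.symm_apply_apply k
  · intro k _; exact π.apply_symm_apply k
  · intro k _; rfl

lemma comm_gAt [Fintype G] (j l : Fin n) (g : G) :
    MonoidAlgebra.of ℂ (WreathProduct G n) (gAt l g) * YJM G n j
      = YJM G n j * MonoidAlgebra.of ℂ (WreathProduct G n) (gAt l g) := by
  by_cases hl : l = j
  · subst hl
    refine conj_YJM l (gAt l g) 1 (fun _ => Equiv.mulLeft g) (fun k hk => hk)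
      (fun k hk => hk) (fun k hk h => ?_)
    simpa using GENj g k l h (ne_of_lt hk)
  · refine conj_YJM j (gAt l g) 1 (fun k => Equiv.mulRight ((Pi.mulSingle l g : Fin n → G) k)⁻¹)
      (fun k hk => hk) (fun k hk => hk) (fun k hk h => ?_)
    have := GEN (Pi.mulSingle l g : Fin n → G) 1 k j h (ne_of_lt hk)
      (by simp [Pi.mulSingle_apply, Ne.symm hl]) rfl
    simpa [gAt_mk l g] using this

lemma comm_term [Fintype G] (i j k : Fin n) (hki : k < i) (hij : i < j) (g : G) :
    MonoidAlgebra.of ℂ (WreathProduct G n)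
        (gAt k g⁻¹ * gAt i g * pIn (Equiv.swap k i)) * YJM G n j
      = YJM G n j * MonoidAlgebra.of ℂ (WreathProduct G n)
        (gAt k g⁻¹ * gAt i g * pIn (Equiv.swap k i)) := by
  have hkj : k ≠ j := ne_of_lt (hki.trans hij)
  have hij' : i ≠ j := ne_of_lt hij
  set f : Fin n → G := Pi.mulSingle k g⁻¹ * Pi.mulSingle i g with hf
  have hfj : f j = 1 := by
    simp [hf, Pi.mulSingle_apply, Ne.symm hkj, Ne.symm hij']
  have hswapj : Equiv.swap k i j = j := Equiv.swap_apply_of_ne_of_ne (Ne.symm hkj) (Ne.symm hij')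
  have hmaps : ∀ m : Fin n, m < j → Equiv.swap k i m < j := by
    intro m hm
    rcases Equiv.swap_apply_def k i m with _
    by_cases h1 : m = k
    · subst h1; rw [Equiv.swap_apply_left]; exact hij
    · by_cases h2 : m = i
      · subst h2; rw [Equiv.swap_apply_right]; exact hki.trans hij
      · rw [Equiv.swap_apply_of_ne_of_ne h1 h2]; exact hm
  refine conj_YJM j (gAt k g⁻¹ * gAt i g * pIn (Equiv.swap k i)) (Equiv.swap k i)
    (fun m => Equiv.mulRight (f (Equiv.swap k i m))⁻¹) hmaps ?_ ?_
  · intro m hm; rw [Equiv.symm_swap]; exact hmaps m hm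
  · intro m hm h
    have := GEN f (Equiv.swap k i) m j h (ne_of_lt hm) hfj hswapj
    rw [T_eq k i g⁻¹ g (Equiv.swap k i)]
    exact this

lemma comm_lt [Fintype G] (i j : Fin n) (hij : i < j) :
    YJM G n i * YJM G n j = YJM G n j * YJM G n i := by
  nth_rewrite 1 [YJM]
  nth_rewrite 3 [YJM]
  rw [Finset.sum_mul, Finset.mul_sum]
  refine Finset.sum_congr rfl fun k hk => ?_
  have hk' : k < i := (Finset.mem_filter.mp hk).2
  rw [Finset.sum_mul, Finset.mul_sum]
  refine Finset.sum_congr rfl fun g _ => ?_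
  exact comm_term i j k hk' hij g


/-- The Young–Jucys–Murphy elements `X_1, …, X_n` pairwise commute, and each
`X_i` commutes with `g^{(l)}` for every `g ∈ G` and every coordinate `l`. -/
theorem YJM_commute (G : Type) [Group G] [Fintype G] (n : ℕ) :
    (∀ i j : Fin n, YJM G n i * YJM G n j = YJM G n j * YJM G n i) ∧
    (∀ (i l : Fin n) (g : G),
      YJM G n i * MonoidAlgebra.of ℂ (WreathProduct G n) (gAt l g) =
        MonoidAlgebra.of ℂ (WreathProduct G n) (gAt l g) * YJM G n i) := by
  constructor
  · intro i j
    rcases lt_trichotomy i j with h | h | h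
    · exact comm_lt i j h
    · rw [h]
    · exact (comm_lt j i h).symm
  · intro i l g
    exact (comm_gAt i l g).symm
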